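/- For every fixed T > 2, the exploration time E(γ) = ((1 − γ)/2)·(T − γ/2 − (1/2)·√(γ² + 4T(2 − γ))) spent on the striving arm by a γ-comfortable competitive-ratio-maximizing agent is strictly decreasing in γ on [0, 1]. That is, as an agent requires more comfort, they spend strictly less time exploring the striving arm. -/

import Mathlib

theorem stmt10 (T : ℝ) (hT : 2 < T) :
    StrictAntiOn (fun γ : ℝ =>
      (1 - γ) / 2 *
        (T - γ / 2 - (1 / 2) * Real.sqrt (γ ^ 2 + 4 * T * (2 - γ))))
      (Set.Icc 0 1) := by
  have hconv : Convex ℝ (Set.Icc (0:ℝ) 1) := convex_Icc 0 1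
  apply strictAntiOn_of_deriv_neg hconv
  · apply Continuous.continuousOn
    continuity
  · intro γ hγ
    rw [interior_Icc] at hγ
    obtain ⟨hγ0, hγ1⟩ := hγ
    set Q : ℝ := γ ^ 2 + 4 * T * (2 - γ) with hQdef
    have hQpos : 0 < Q := by nlinarith
    have hr : (0:ℝ) < Real.sqrt Q := Real.sqrt_pos.mpr hQpos
    set r : ℝ := Real.sqrt Q with hrdef
    have hr2 : r ^ 2 = Q := Real.sq_sqrt hQpos.le
    -- derivative of inner polynomial
    have h1 : HasDerivAt (fun x : ℝ => x ^ 2 + 4 * T * (2 - x)) (2 * γ - 4 * T) γ := by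
      have hp : HasDerivAt (fun x : ℝ => x ^ 2) (2 * γ) γ := by
        simpa using hasDerivAt_pow 2 γ
      have hl : HasDerivAt (fun x : ℝ => 4 * T * (2 - x)) (-(4 * T)) γ := by
        have : HasDerivAt (fun x : ℝ => 2 - x) (-1) γ := by
          simpa using (hasDerivAt_const γ (2:ℝ)).fun_sub (hasDerivAt_id γ)
        simpa using (this.const_mul (4 * T))
      simpa [sub_eq_add_neg] using hp.fun_add hl
    have hQne : (γ ^ 2 + 4 * T * (2 - γ)) ≠ 0 := ne_of_gt hQpos
    have hsqrt : HasDerivAt (fun x : ℝ => Real.sqrt (x ^ 2 + 4 * T * (2 - x)))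
        (1 / (2 * r) * (2 * γ - 4 * T)) γ :=
      (Real.hasDerivAt_sqrt hQne).comp γ h1
    have hA : HasDerivAt (fun x : ℝ => (1 - x) / 2) (-(1 / 2)) γ := by
      have : HasDerivAt (fun x : ℝ => 1 - x) (-1) γ := by
        simpa using (hasDerivAt_const γ (1:ℝ)).fun_sub (hasDerivAt_id γ)
      simpa [neg_div] using this.div_const 2
    have hB : HasDerivAt (fun x : ℝ => T - x / 2 - (1 / 2) * Real.sqrt (x ^ 2 + 4 * T * (2 - x)))
        (-(1 / 2) - (1 / 2) * (1 / (2 * r) * (2 * γ - 4 * T))) γ := by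
      have h2 : HasDerivAt (fun x : ℝ => T - x / 2) (-(1 / 2)) γ := by
        simpa using (hasDerivAt_const γ T).fun_sub ((hasDerivAt_id γ).div_const 2)
      simpa using h2.fun_sub (hsqrt.const_mul (1 / 2 : ℝ))
    have hF := hA.fun_mul hB
    rw [hF.deriv]
    -- algebraic inequality
    have hlt1 : r < 2 * T - γ := by
      have : Q < (2 * T - γ) ^ 2 := by nlinarith
      have := Real.sqrt_lt_sqrt hQpos.le this
      rwa [Real.sqrt_sq (by nlinarith)] at this
    have hlt2 : 1 - γ < r := by
      nlinarith [hr2, hr]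
    have key : -(1 / 2) * (T - γ / 2 - 1 / 2 * r) +
        (1 - γ) / 2 * (-(1 / 2) - 1 / 2 * (1 / (2 * r) * (2 * γ - 4 * T)))
        = (2 * T - γ - r) * ((1 - γ) - r) / (4 * r) := by
      field_simp
      ring
    rw [key]
    apply div_neg_of_neg_of_pos _ (by linarith)
    exact mul_neg_of_pos_of_neg (by linarith) (by linarith)
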